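/- arXiv:1507.03064 — 4 statements merged into one kernel-verified Lean document; each statement's English description precedes it below -/
import Mathlib

section
/- Let Ω be the ℚ(v)-vector space with basis {ω_s : s ∈ ℤ}, and define operators on Ω by u_i^+ · ω_s = δ_{i+1, s̄} ω_{s−1}, u_i^− · ω_s = δ_{i, s̄} ω_{s+1}, K_i · ω_s = v^{δ_{i,s̄} − δ_{i+1,s̄}} ω_s for i ∈ ℤ/nℤ. Then these operators satisfy [u_i^+, u_j^−] = δ_{i,j} (K_i − K_i^{−1})/(v − v^{−1}) as operators on Ω. -/
noncomputable section

open Finsupp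

/-- The natural representation `Ω`: the `ℚ(v)`-vector space with basis `{ω_s : s ∈ ℤ}`,
encoded as `ℤ →₀ ℚ(v)` with `ω_s = single s 1`. -/
abbrev Omega : Type := ℤ →₀ RatFunc ℚ

/-- `v ∈ ℚ(v)`. -/
abbrev vv : RatFunc ℚ := RatFunc.X

/-- `u_i^+ · ω_s = δ_{i+1, s̄} ω_{s-1}`, where `s̄` is the class of `s` in `ℤ/nℤ`. -/
def up (n : ℕ) (i : ZMod n) : Omega →ₗ[RatFunc ℚ] Omega :=
  Finsupp.lsum (RatFunc ℚ) fun s : ℤ =>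
    if ((s : ZMod n) = i + 1) then Finsupp.lsingle (s - 1) else 0

/-- `u_i^- · ω_s = δ_{i, s̄} ω_{s+1}`. -/
def um (n : ℕ) (i : ZMod n) : Omega →ₗ[RatFunc ℚ] Omega :=
  Finsupp.lsum (RatFunc ℚ) fun s : ℤ =>
    if ((s : ZMod n) = i) then Finsupp.lsingle (s + 1) else 0

/-- `K_i · ω_s = v^(δ_{i,s̄} - δ_{i+1,s̄}) ω_s`. -/
def Kop (n : ℕ) (i : ZMod n) : Omega →ₗ[RatFunc ℚ] Omega :=
  Finsupp.lsum (RatFunc ℚ) fun s : ℤ =>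
    vv ^ (((if (s : ZMod n) = i then 1 else 0) - (if (s : ZMod n) = i + 1 then 1 else 0) : ℤ)) •
      Finsupp.lsingle s

/-- `K_i^{-1} · ω_s = v^(-δ_{i,s̄} + δ_{i+1,s̄}) ω_s`. -/
def Kinv (n : ℕ) (i : ZMod n) : Omega →ₗ[RatFunc ℚ] Omega :=
  Finsupp.lsum (RatFunc ℚ) fun s : ℤ =>
    vv ^ ((-(if (s : ZMod n) = i then 1 else 0) + (if (s : ZMod n) = i + 1 then 1 else 0) : ℤ)) •
      Finsupp.lsingle s

lemma vv_sub_inv_ne : vv - vv⁻¹ ≠ 0 := by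
  intro h
  have hX : (RatFunc.X : RatFunc ℚ) ≠ 0 := RatFunc.X_ne_zero
  have h2 : vv * vv = 1 := by
    have hh := sub_eq_zero.mp h
    nth_rewrite 1 [hh]
    exact inv_mul_cancel₀ hX
  have h3 : (Polynomial.X * Polynomial.X : Polynomial ℚ) = 1 := by
    apply RatFunc.algebraMap_injective ℚ
    simpa [RatFunc.algebraMap_X] using h2
  have := congrArg Polynomial.natDegree h3
  simp [Polynomial.natDegree_mul (Polynomial.X_ne_zero) (Polynomial.X_ne_zero)] at this

/-- On the natural representation `Ω` of `𝔇(Δ_n)`, the operators `u_i^±`, `K_i^{±1}` satisfy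
`[u_i^+, u_j^-] = δ_{i,j} (K_i - K_i^{-1})/(v - v^{-1})`. -/
theorem stmt9 (n : ℕ) (hn : 2 ≤ n) (i j : ZMod n) :
    up n i ∘ₗ um n j - um n j ∘ₗ up n i =
      if i = j then (vv - vv⁻¹)⁻¹ • (Kop n i - Kinv n i) else 0 := by
  have hne : i ≠ i + 1 := by
    intro h
    have h1 : (1 : ZMod n) = 0 := (left_eq_add.mp h)
    haveI : Fact (1 < n) := ⟨by omega⟩
    exact one_ne_zero h1
  apply Finsupp.lhom_ext
  intro s c
  simp only [up, um, Kop, Kinv, LinearMap.sub_apply, LinearMap.comp_apply,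
    Finsupp.lsum_single, LinearMap.smul_apply, LinearMap.zero_apply]
  rcases eq_or_ne i j with hij | hij
  · subst hij
    rw [if_pos rfl]
    by_cases hsi : (s : ZMod n) = i
    · have hs1 : ¬ ((s : ZMod n) = i + 1) := fun h => hne (hsi.symm.trans h)
      have h1 : (((s + 1 : ℤ)) : ZMod n) = i + 1 := by push_cast; rw [hsi]
      simp only [if_pos hsi, if_neg hs1, if_pos h1, Finsupp.lsingle_apply,
        Finsupp.lsum_single, LinearMap.zero_apply, map_zero, sub_zero,
        add_sub_cancel_right, LinearMap.sub_apply, LinearMap.smul_apply]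
      norm_num
      rw [← Finsupp.single_mul, ← Finsupp.single_mul, ← Finsupp.single_sub, Finsupp.smul_single]
      congr 1
      rw [smul_eq_mul, ← sub_mul, ← mul_assoc, inv_mul_cancel₀ vv_sub_inv_ne, one_mul]
    · by_cases hs1 : (s : ZMod n) = i + 1
      · have h1 : ¬ (((s - 1 : ℤ)) : ZMod n) = i + 1 := by
          push_cast
          rw [hs1]
          intro h
          exact hne (by linear_combination h)
        have h2 : (((s - 1 : ℤ)) : ZMod n) = i := by
          push_cast
          rw [hs1]; ring
        simp only [if_pos hs1, if_neg hsi, if_pos h2, Finsupp.lsingle_apply,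
          Finsupp.lsum_single, LinearMap.zero_apply, map_zero, zero_sub,
          sub_add_cancel, LinearMap.sub_apply, LinearMap.smul_apply]
        norm_num
        rw [← Finsupp.single_mul, ← Finsupp.single_mul, ← Finsupp.single_sub, Finsupp.smul_single,
          ← Finsupp.single_neg]
        congr 1
        rw [smul_eq_mul, ← sub_mul, ← mul_assoc, show vv⁻¹ - vv = -(vv - vv⁻¹) by ring,
          mul_neg, inv_mul_cancel₀ vv_sub_inv_ne, neg_one_mul]
      · simp only [if_neg hsi, if_neg hs1, Finsupp.lsingle_apply,
          LinearMap.zero_apply, map_zero, sub_zero, LinearMap.sub_apply,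
          LinearMap.smul_apply, Finsupp.lsum_single]
        norm_num
  · rw [if_neg hij]
    by_cases hsj : (s : ZMod n) = j
    · have hs1 : ¬ (((s + 1 : ℤ)) : ZMod n) = i + 1 := by
        push_cast
        rw [hsj]
        intro h
        exact hij (by linear_combination -h)
      by_cases hsi : (s : ZMod n) = i + 1
      · have hnj : ¬ (((s - 1 : ℤ)) : ZMod n) = j := by
          push_cast
          rw [hsi]
          intro h
          exact hij (by linear_combination h)
        simp only [if_pos hsj, if_pos hsi, Finsupp.lsingle_apply,
          Finsupp.lsum_single, if_neg hs1, if_neg hnj, LinearMap.zero_apply,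
          map_zero, sub_self]
      · simp only [if_pos hsj, if_neg hsi, Finsupp.lsingle_apply,
          Finsupp.lsum_single, if_neg hs1, LinearMap.zero_apply, map_zero,
          sub_self, sub_zero]
    · by_cases hsi : (s : ZMod n) = i + 1
      · have hnj : ¬ (((s - 1 : ℤ)) : ZMod n) = j := by
          push_cast
          rw [hsi]
          intro h
          exact hij (by linear_combination h)
        simp only [if_neg hsj, if_pos hsi, Finsupp.lsingle_apply,
          Finsupp.lsum_single, if_neg hnj, LinearMap.zero_apply, map_zero,
          zero_sub, neg_zero]
      · simp only [if_neg hsj, if_neg hsi, LinearMap.zero_apply, map_zero,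
          sub_self]

end
end

section
/- Let λ = (λ_1, ..., λ_t) be an n-regular partition (λ_s > λ_{s+n−1} whenever both are defined). Then the multisegment m_λ = ∑_{s=1}^t [(1−s) mod n, λ_s] over ℤ/nℤ is aperiodic: for each l ≥ 1, there exists i ∈ ℤ/nℤ such that the multiplicity of the segment [i, l] in m_λ is zero. Conversely, if m_λ is aperiodic then λ is n-regular. -/
/-- A partition, encoded as a weakly decreasing eventually-zero function `ℕ → ℕ`
(`l s` is the part `λ_{s+1}`, i.e. parts are 0-indexed). -/
def IsPartitionFun (l : ℕ → ℕ) : Prop := Antitone l ∧ ∃ N, ∀ j, N ≤ j → l j = 0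

/-- `λ` is `n`-regular: no (positive) part value is repeated `n` or more times; with 0-indexed
parts, `λ_{s+1} > λ_{s+n}` whenever the part `λ_{s+n}` is nonzero. -/
def NRegular (n : ℕ) (l : ℕ → ℕ) : Prop :=
  ∀ s : ℕ, 0 < l (s + (n - 1)) → l (s + (n - 1)) < l s

/-- The multisegment `m_λ = ∑_{a≥1} [(1-a) mod n, λ_a]` over `ℤ/nℤ` is aperiodic: for each
length `L ≥ 1` there is a vertex `i ∈ ℤ/nℤ` such that no segment `[i, L]` occurs in `m_λ`,
i.e. no (0-indexed) `s` has `λ_{s+1} = L` and `-s ≡ i (mod n)`. -/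
def Aperiodic (n : ℕ) (l : ℕ → ℕ) : Prop :=
  ∀ L : ℕ, 1 ≤ L → ∃ i : ZMod n, ∀ s : ℕ, ¬(l s = L ∧ (-(s : ZMod n)) = i)

/-- A partition `λ` is `n`-regular if and only if the associated multisegment `m_λ` over
`ℤ/nℤ` is aperiodic. -/
theorem stmt17 (n : ℕ) (hn : 2 ≤ n) (l : ℕ → ℕ) (hl : IsPartitionFun l) :
    NRegular n l ↔ Aperiodic n l := by
  obtain ⟨hanti, N, hN⟩ := hl
  haveI : NeZero n := ⟨by omega⟩
  constructor
  · intro hreg L hL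
    by_cases hex : ∃ s, l s = L
    · classical
      set a := Nat.find hex with ha
      have haL : l a = L := Nat.find_spec hex
      have hub : ∀ s, l s = L → s < a + (n - 1) := by
        intro s hs
        by_contra hc
        push_neg at hc
        have h1 : l (a + (n - 1)) ≥ L := hs ▸ hanti hc
        have h2 : l (a + (n - 1)) < l a := hreg a (by omega)
        omega
      refine ⟨-((a + (n - 1) : ℕ) : ZMod n), ?_⟩
      rintro s ⟨hs, hi⟩
      have hlb : a ≤ s := Nat.find_min' hex hs
      have hub' : s < a + (n - 1) := hub s hs
      have : ((s : ℕ) : ZMod n) = ((a + (n - 1) : ℕ) : ZMod n) := by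
        have := neg_injective hi
        exact this
      rw [ZMod.natCast_eq_natCast_iff] at this
      have hdvd : n ∣ (a + (n - 1) - s) := (Nat.modEq_iff_dvd' (by omega)).mp this
      have := Nat.le_of_dvd (by omega) hdvd
      omega
    · push_neg at hex
      exact ⟨0, fun s h => hex s h.1⟩
  · intro hap s hpos
    by_contra hc
    push_neg at hc
    have hle : l (s + (n - 1)) ≤ l s := hanti (by omega)
    have heq : l (s + (n - 1)) = l s := le_antisymm hle hc
    set L := l s with hLdef
    obtain ⟨i, hi⟩ := hap L (by omega)
    set x := (-i - (s : ZMod n)).val with hx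
    have hxlt : x < n := ZMod.val_lt _
    have hjx : ((x : ℕ) : ZMod n) = -i - (s : ZMod n) := by rw [hx, ZMod.natCast_val, ZMod.cast_id]
    have hlj : l (s + x) = L := by
      have h1 : l (s + x) ≤ l s := hanti (by omega)
      have h2 : l (s + (n - 1)) ≤ l (s + x) := hanti (by omega)
      omega
    exact hi (s + x) ⟨hlj, by push_cast [hjx]; ring⟩
end

section
/- For the ladder construction: let λ = (λ_1,...,λ_t) be an n-regular partition, s maximal with λ_1 = ... = λ_s > λ_{s+1}, and k ≥ 0 maximal such that λ_{s+l(n−1)+1} = ... = λ_{s+(l+1)(n−1)} and λ_{s+l(n−1)} = λ_{s+l(n−1)+1} + 1 for all 0 ≤ l ≤ k−1. Define μ by μ_a = λ_a − 1 if a = s + l(n−1) for some 0 ≤ l ≤ k, and μ_a = λ_a otherwise. Then μ is again an n-regular partition. -/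
open Classical in
/-- The "ladder method": let `λ` be an `n`-regular partition (parts `l 1 ≥ l 2 ≥ ⋯`,
1-indexed, eventually zero), let `s ≥ 1` be maximal with `λ_1 = ⋯ = λ_s > λ_{s+1}`, and let
`k ≥ 0` be maximal such that for all `0 ≤ j ≤ k-1`,
`λ_{s+j(n-1)+1} = ⋯ = λ_{s+(j+1)(n-1)}` and `λ_{s+j(n-1)} = λ_{s+j(n-1)+1} + 1`.
Define `μ` by subtracting `1` from the parts at the ladder positions
`a = s + j(n-1)`, `0 ≤ j ≤ k`, and leaving the remaining parts unchanged.
Then `μ` is again an `n`-regular partition. -/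
theorem stmt18 (n : ℕ) (hn : 2 ≤ n) (l : ℕ → ℕ)
    (hanti : ∀ a b : ℕ, 1 ≤ a → a ≤ b → l b ≤ l a)
    (hfin : ∃ N, ∀ j, N ≤ j → l j = 0)
    (hreg : ∀ a : ℕ, 1 ≤ a → 0 < l (a + (n - 1)) → l (a + (n - 1)) < l a)
    (s : ℕ) (hs1 : 1 ≤ s) (hpos : 0 < l s)
    (hsconst : ∀ a, 1 ≤ a → a ≤ s → l a = l 1)
    (hsmax : l (s + 1) < l s)
    (k : ℕ)
    (hladder : ∀ j, j < k →
      (∀ a b, s + j * (n - 1) + 1 ≤ a → a ≤ b → b ≤ s + (j + 1) * (n - 1) → l a = l b) ∧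
        l (s + j * (n - 1)) = l (s + j * (n - 1) + 1) + 1)
    (hkmax : ¬((∀ a b, s + k * (n - 1) + 1 ≤ a → a ≤ b → b ≤ s + (k + 1) * (n - 1) →
        l a = l b) ∧ l (s + k * (n - 1)) = l (s + k * (n - 1) + 1) + 1)) :
    (∀ a b : ℕ, 1 ≤ a → a ≤ b →
      (if ∃ j ≤ k, b = s + j * (n - 1) then l b - 1 else l b) ≤
        (if ∃ j ≤ k, a = s + j * (n - 1) then l a - 1 else l a)) ∧
    (∀ a : ℕ, 1 ≤ a →
      0 < (if ∃ j ≤ k, a + (n - 1) = s + j * (n - 1) then l (a + (n - 1)) - 1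
        else l (a + (n - 1))) →
      (if ∃ j ≤ k, a + (n - 1) = s + j * (n - 1) then l (a + (n - 1)) - 1
        else l (a + (n - 1))) < (if ∃ j ≤ k, a = s + j * (n - 1) then l a - 1 else l a)) := by
  set m := n - 1 with hmdef
  have hm : 1 ≤ m := by omega
  -- the value at a ladder step is 0 if there is no strict drop right after it
  have heq0 : l (s + k * m + 1) = l (s + k * m) → l (s + k * m) = 0 := by
    intro heq
    rcases Nat.eq_zero_or_pos k with rfl | hk
    · simp only [zero_mul, add_zero] at heq ⊢
      omega
    · obtain ⟨k', rfl⟩ : ∃ k', k = k' + 1 := ⟨k - 1, by omega⟩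
      have hmul : (k' + 1) * m = k' * m + m := by ring
      have hc := (hladder k' (by omega)).1 (s + k' * m + 1) (s + (k' + 1) * m) le_rfl
        (by omega) le_rfl
      have he : s + k' * m + 1 + m = s + (k' + 1) * m + 1 := by omega
      by_contra hne
      have hpos2 : 0 < l (s + k' * m + 1 + m) := by rw [he]; omega
      have hr := hreg (s + k' * m + 1) (by omega) hpos2
      rw [he] at hr
      omega
  have hstep1 : l (s + k * m + 1) < l (s + k * m) ∨ l (s + k * m) = 0 := by
    have hle := hanti (s + k * m) (s + k * m + 1) (by omega) (by omega)
    by_cases h : l (s + k * m + 1) = l (s + k * m)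
    · exact Or.inr (heq0 h)
    · exact Or.inl (by omega)
  have hstep2 : l (s + (k + 1) * m) + 1 < l (s + k * m) ∨ l (s + (k + 1) * m) = 0 := by
    have hmul : (k + 1) * m = k * m + m := by ring
    have hle1 := hanti (s + k * m) (s + k * m + 1) (by omega) (by omega)
    have hle2 := hanti (s + k * m + 1) (s + (k + 1) * m) (by omega) (by omega)
    by_cases hB : l (s + k * m) = l (s + k * m + 1) + 1
    · have hA : ¬ ∀ a b, s + k * m + 1 ≤ a → a ≤ b → b ≤ s + (k + 1) * m → l a = l b := by
        intro hA; exact hkmax ⟨hA, hB⟩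
      push_neg at hA
      obtain ⟨a, b, ha1, hab, hb1, hne⟩ := hA
      have h1 := hanti (s + k * m + 1) a (by omega) ha1
      have h2 := hanti a b (by omega) hab
      have h3 := hanti b (s + (k + 1) * m) (by omega) hb1
      left; omega
    · rcases Nat.lt_or_ge (l (s + k * m + 1) + 1) (l (s + k * m)) with h | h
      · left; omega
      · have hEq : l (s + k * m + 1) = l (s + k * m) := by omega
        have h0 := heq0 hEq
        right; omega
  -- one-step monotonicity of μ
  have hstep : ∀ a, 1 ≤ a →
      (if ∃ j ≤ k, a + 1 = s + j * m then l (a + 1) - 1 else l (a + 1)) ≤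
        (if ∃ j ≤ k, a = s + j * m then l a - 1 else l a) := by
    intro a ha
    have hub1 : (if ∃ j ≤ k, a + 1 = s + j * m then l (a + 1) - 1 else l (a + 1)) ≤
        l (a + 1) := by split <;> omega
    by_cases hL : ∃ j ≤ k, a = s + j * m
    · rw [if_pos hL]
      obtain ⟨j, hjk, rfl⟩ := hL
      rcases Nat.lt_or_ge j k with hjlt | hge
      · have h2 := (hladder j hjlt).2
        omega
      · have hjeq : j = k := by omega
        subst hjeq
        rcases hstep1 with h | h
        · omega
        · have hle := hanti (s + j * m) (s + j * m + 1) (by omega) (by omega)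
          omega
    · rw [if_neg hL]
      have hle := hanti a (a + 1) ha (by omega)
      omega
  -- monotonicity over any distance
  have hmono : ∀ d a, 1 ≤ a →
      (if ∃ j ≤ k, a + d = s + j * m then l (a + d) - 1 else l (a + d)) ≤
        (if ∃ j ≤ k, a = s + j * m then l a - 1 else l a) := by
    intro d
    induction d with
    | zero => intro a _; simp only [Nat.add_zero]; exact le_rfl
    | succ d ih =>
      intro a ha
      have h1 := hstep (a + d) (by omega)
      have h2 := ih a ha
      rw [show a + (d + 1) = a + d + 1 by omega]
      exact le_trans h1 h2
  constructor
  · intro a b ha hab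
    obtain ⟨d, rfl⟩ := Nat.exists_eq_add_of_le hab
    exact hmono d a ha
  · intro a ha hpos2
    by_cases hL2 : ∃ j ≤ k, a + m = s + j * m
    · rw [if_pos hL2] at hpos2 ⊢
      by_cases hL1 : ∃ j ≤ k, a = s + j * m
      · rw [if_pos hL1]
        obtain ⟨j', hj'k, rfl⟩ := hL1
        obtain ⟨j, hjk, hje⟩ := hL2
        have hmulj : (j' + 1) * m = j' * m + m := by ring
        have hjj : (j' + 1) * m = j * m := by omega
        have hj : j = j' + 1 := (Nat.eq_of_mul_eq_mul_right (by omega) hjj).symm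
        subst hj
        have hj'lt : j' < k := by omega
        have h2 := (hladder j' hj'lt).2
        have hc := (hladder j' hj'lt).1 (s + j' * m + 1) (s + (j' + 1) * m) le_rfl
          (by omega) le_rfl
        rw [show s + j' * m + m = s + (j' + 1) * m by omega] at hpos2 ⊢
        omega
      · rw [if_neg hL1]
        have hle := hanti a (a + m) ha (by omega)
        omega
    · rw [if_neg hL2] at hpos2 ⊢
      by_cases hL1 : ∃ j ≤ k, a = s + j * m
      · rw [if_pos hL1]
        obtain ⟨j', hj'k, rfl⟩ := hL1
        have hmulj : (j' + 1) * m = j' * m + m := by ring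
        have hj'eq : j' = k := by
          by_contra hne
          exact hL2 ⟨j' + 1, by omega, by omega⟩
        subst hj'eq
        rw [show s + j' * m + m = s + (j' + 1) * m by omega] at hpos2 ⊢
        rcases hstep2 with h | h
        · omega
        · omega
      · rw [if_neg hL1]
        exact hreg a ha hpos2
end

section
/- Suppose a bar-involution x ↦ x̄ on a free ℤ[v,v^{−1}]-module with basis {|λ⟩ : λ ∈ Π} indexed by a poset Π with finite lower intervals satisfies |λ⟩‾ = |λ⟩ + ∑_{μ < λ} a_{μ,λ}|μ⟩ with a_{μ,λ} ∈ ℤ[v,v^{−1}], and is a semilinear involution (v̄ = v^{−1}, involutive). Then there is a unique basis {b_λ} with b̄_λ = b_λ and b_λ ∈ |λ⟩ + ∑_{μ < λ} v^{−1}ℤ[v^{−1}]|μ⟩. -/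
namespace S


variable {P : Type} [PartialOrder P]

/-- The defining property of the canonical basis element at `p`. -/
abbrev Good (bar : (P →₀ LaurentPolynomial ℤ) →+ (P →₀ LaurentPolynomial ℤ))
    (b : P →₀ LaurentPolynomial ℤ) (p : P) : Prop :=
  bar b = b ∧ b p = 1 ∧
    ∀ q : P, q ≠ p → ((b q ≠ 0 → q < p) ∧ (∀ d : ℤ, 0 ≤ d → AddMonoidAlgebra.coeff (b q) d = 0))

theorem bar_apply_max (bar : (P →₀ LaurentPolynomial ℤ) →+ (P →₀ LaurentPolynomial ℤ))
    (hsemi : ∀ (c : LaurentPolynomial ℤ) (x : P →₀ LaurentPolynomial ℤ),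
      bar (c • x) = (LaurentPolynomial.invert c) • bar x)
    (htri : ∀ p q : P, (bar (Finsupp.single p 1) - Finsupp.single p 1 : P →₀ LaurentPolynomial ℤ) q ≠ 0 → q < p)
    (x : P →₀ LaurentPolynomial ℤ) (μ : P) (hμ : ∀ ν ∈ x.support, ¬ μ < ν) :
    bar x μ = LaurentPolynomial.invert (x μ) := by
  have hsingle : ∀ (ν : P) (c : LaurentPolynomial ℤ),
      bar (Finsupp.single ν c) = LaurentPolynomial.invert c • bar (Finsupp.single ν 1) := by
    intro ν c
    rw [← hsemi]
    congr 1
    rw [Finsupp.smul_single', mul_one]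
  have hbs : ∀ ν : P, ¬ μ < ν →
      (bar (Finsupp.single ν 1)) μ = (Finsupp.single ν (1 : LaurentPolynomial ℤ)) μ := by
    intro ν hν
    by_contra h
    exact hν (htri ν μ (by rwa [Finsupp.sub_apply, sub_ne_zero]))
  have hsum : (∑ ν ∈ x.support, (bar (Finsupp.single ν (x ν))) μ)
      = (bar (Finsupp.single μ (x μ))) μ := by
    refine Finset.sum_eq_single μ ?_ ?_
    · intro ν hν hνμ
      rw [hsingle, Finsupp.smul_apply, hbs ν (hμ ν hν), Finsupp.single_eq_of_ne' hνμ,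
        smul_eq_mul, mul_zero]
    · intro hμs
      rw [Finsupp.notMem_support_iff.mp hμs, Finsupp.single_zero, map_zero, Finsupp.coe_zero,
        Pi.zero_apply]
  conv_lhs => rw [← Finsupp.sum_single x, map_finsuppSum]
  rw [Finsupp.sum_apply, Finsupp.sum, hsum, hsingle, Finsupp.smul_apply,
    hbs μ (lt_irrefl μ), Finsupp.single_eq_same, smul_eq_mul, mul_one]

theorem selfbar_eq_zero (bar : (P →₀ LaurentPolynomial ℤ) →+ (P →₀ LaurentPolynomial ℤ))
    (hsemi : ∀ (c : LaurentPolynomial ℤ) (x : P →₀ LaurentPolynomial ℤ),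
      bar (c • x) = (LaurentPolynomial.invert c) • bar x)
    (htri : ∀ p q : P, (bar (Finsupp.single p 1) - Finsupp.single p 1 : P →₀ LaurentPolynomial ℤ) q ≠ 0 → q < p)
    (x : P →₀ LaurentPolynomial ℤ) (hbar : bar x = x)
    (hneg : ∀ (q : P) (e : ℤ), 0 ≤ e → AddMonoidAlgebra.coeff (x q) e = 0) : x = 0 := by
  by_contra hx
  obtain ⟨μ, hμs, hmax⟩ := x.support.exists_maximal (Finsupp.support_nonempty_iff.mpr hx)
  replace hmax : ∀ ν ∈ x.support, ¬ μ < ν := fun ν hν hlt => hlt.not_ge (hmax hν hlt.le)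
  have h1 := bar_apply_max bar hsemi htri x μ hmax
  rw [hbar] at h1
  have hxμ : x μ ≠ 0 := Finsupp.mem_support_iff.mp hμs
  obtain ⟨e, he⟩ := Finsupp.support_nonempty_iff.mpr (mt AddMonoidAlgebra.coeff_eq_zero.mp hxμ)
  have he' : AddMonoidAlgebra.coeff (x μ) e ≠ 0 := Finsupp.mem_support_iff.mp he
  rcases le_or_gt 0 e with h | h
  · exact he' (hneg μ e h)
  · have : AddMonoidAlgebra.coeff (x μ) e = AddMonoidAlgebra.coeff (x μ) (-e) := by
      conv_lhs => rw [h1]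
      exact LaurentPolynomial.invert_apply (x μ) e
    rw [this] at he'
    exact he' (hneg μ (-e) (by omega))


noncomputable def Lcl [DecidableEq P] (hfin : ∀ x : P, {y : P | y ≤ x}.Finite)
    (d : P →₀ LaurentPolynomial ℤ) : Finset P :=
  d.support.biUnion fun σ => (hfin σ).toFinset

theorem mem_Lcl [DecidableEq P] {hfin : ∀ x : P, {y : P | y ≤ x}.Finite}
    {d : P →₀ LaurentPolynomial ℤ} {ν : P} :
    ν ∈ Lcl hfin d ↔ ∃ σ ∈ d.support, ν ≤ σ := by
  simp [Lcl, Set.Finite.mem_toFinset]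



variable {P : Type} [PartialOrder P]

-- the negative-part decomposition of an anti-invariant Laurent polynomial
theorem gamma_decomp (c : LaurentPolynomial ℤ) (hc : LaurentPolynomial.invert c = -c) :
    ∃ γ : LaurentPolynomial ℤ, (∀ e : ℤ, 0 ≤ e → AddMonoidAlgebra.coeff γ e = 0) ∧
      γ - LaurentPolynomial.invert γ = c := by
  refine ⟨AddMonoidAlgebra.ofCoeff (Finsupp.filter (fun e : ℤ => e < 0) (AddMonoidAlgebra.coeff c)), fun e he => by
    rw [AddMonoidAlgebra.coeff_ofCoeff, Finsupp.filter_apply, if_neg (not_lt.mpr he)], ?_⟩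
  have hcc : ∀ e : ℤ, AddMonoidAlgebra.coeff c (-e) = -(AddMonoidAlgebra.coeff c e) := by
    intro e
    have := congrArg (fun f : LaurentPolynomial ℤ => AddMonoidAlgebra.coeff f e) hc
    simpa [LaurentPolynomial.invert_apply, AddMonoidAlgebra.coeff_neg, Finsupp.neg_apply] using this
  refine LaurentPolynomial.ext fun e => ?_
  rw [AddMonoidAlgebra.coeff_sub, Finsupp.sub_apply]
  rw [LaurentPolynomial.invert_apply, AddMonoidAlgebra.coeff_ofCoeff]
  rw [Finsupp.filter_apply, Finsupp.filter_apply]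
  rcases lt_trichotomy e 0 with h | h | h
  · rw [if_pos h, if_neg (by omega), sub_zero]
  · subst h
    have h0 : AddMonoidAlgebra.coeff c 0 = 0 := by have := hcc 0; simp at this; omega
    simp [h0]
  · rw [if_neg (by omega), if_pos (by omega), hcc, zero_sub, neg_neg]

theorem key [DecidableEq P] (hfin : ∀ x : P, {y : P | y ≤ x}.Finite)
    (bar : (P →₀ LaurentPolynomial ℤ) →+ (P →₀ LaurentPolynomial ℤ))
    (hsemi : ∀ (c : LaurentPolynomial ℤ) (x : P →₀ LaurentPolynomial ℤ),
      bar (c • x) = (LaurentPolynomial.invert c) • bar x)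
    (htri : ∀ p q : P, (bar (Finsupp.single p 1) - Finsupp.single p 1 : P →₀ LaurentPolynomial ℤ) q ≠ 0 → q < p) :
    ∀ (n : ℕ) (d : P →₀ LaurentPolynomial ℤ), bar d = -d →
      ∀ B : P → (P →₀ LaurentPolynomial ℤ),
        (∀ μ : P, (∃ σ ∈ d.support, μ ≤ σ) → Good bar (B μ) μ) →
        (Lcl hfin d).card ≤ n →
        ∃ z : P →₀ LaurentPolynomial ℤ, z - bar z = d ∧
          (∀ ν : P, z ν ≠ 0 → ∃ σ ∈ d.support, ν ≤ σ) ∧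
          (∀ (ν : P) (e : ℤ), 0 ≤ e → AddMonoidAlgebra.coeff (z ν) e = 0) := by
  intro n
  induction n with
  | zero =>
    intro d hbar B hB hcard
    have hd : d = 0 := by
      by_contra hd
      obtain ⟨σ, hσ⟩ := Finsupp.support_nonempty_iff.mpr hd
      have : σ ∈ Lcl hfin d := mem_Lcl.mpr ⟨σ, hσ, le_rfl⟩
      have := Finset.card_pos.mpr ⟨σ, this⟩
      omega
    subst hd
    exact ⟨0, by simp, by simp, by simp⟩
  | succ n ih =>
    intro d hbar B hB hcard
    by_cases hd : d = 0
    · subst hd; exact ⟨0, by simp, by simp, by simp⟩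
    obtain ⟨μ, hμs, hmax⟩ := d.support.exists_maximal (Finsupp.support_nonempty_iff.mpr hd)
    replace hmax : ∀ ν ∈ d.support, ¬ μ < ν := fun ν hν hlt => hlt.not_ge (hmax hν hlt.le)
    -- anti-invariance of the leading coefficient
    have h1 := bar_apply_max bar hsemi htri d μ hmax
    rw [hbar, Finsupp.neg_apply] at h1
    have hc : LaurentPolynomial.invert (d μ) = -(d μ) := h1.symm
    obtain ⟨γ, hγneg, hγc⟩ := gamma_decomp (d μ) hc
    obtain ⟨hGb, hGμ, hGq⟩ := hB μ ⟨μ, hμs, le_rfl⟩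
    set c := d μ with hcdef
    set b := B μ with hbdef
    set d' := d - c • b with hd'def
    have hbard' : bar d' = -d' := by
      rw [hd'def, map_sub, hbar, hsemi, hGb, hc, neg_smul]
      abel
    -- supports
    have hbsupp : ∀ ν : P, b ν ≠ 0 → ν ≤ μ := by
      intro ν hν
      by_cases hνμ : ν = μ
      · exact le_of_eq hνμ
      · exact le_of_lt ((hGq ν hνμ).1 hν)
    have hsupp' : ∀ ν : P, d' ν ≠ 0 → ν ∈ d.support ∨ ν ≤ μ := by
      intro ν hν
      by_contra hcon
      push_neg at hcon
      have h2 : d ν = 0 := Finsupp.notMem_support_iff.mp hcon.1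
      have h3 : b ν = 0 := by
        by_contra h3
        exact hcon.2 (hbsupp ν h3)
      rw [hd'def, Finsupp.sub_apply, Finsupp.smul_apply, h2, h3, smul_zero, sub_zero] at hν
      exact hν rfl
    have hd'μ : d' μ = 0 := by
      rw [hd'def, Finsupp.sub_apply, Finsupp.smul_apply, hGμ, smul_eq_mul, mul_one, sub_self]
    have hLsub : Lcl hfin d' ⊆ (Lcl hfin d).erase μ := by
      intro ρ hρ
      obtain ⟨ν, hν, hρν⟩ := mem_Lcl.mp hρ
      have hν' := hsupp' ν (Finsupp.mem_support_iff.mp hν)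
      have hρL : ρ ∈ Lcl hfin d := by
        rcases hν' with h | h
        · exact mem_Lcl.mpr ⟨ν, h, hρν⟩
        · exact mem_Lcl.mpr ⟨μ, hμs, hρν.trans h⟩
      refine Finset.mem_erase.mpr ⟨?_, hρL⟩
      rintro rfl
      have hνρ : ρ ≠ ν := by
        rintro rfl
        exact Finsupp.mem_support_iff.mp hν hd'μ
      have hlt : ρ < ν := lt_of_le_of_ne hρν hνρ
      rcases hν' with h | h
      · exact hmax ν h hlt
      · exact absurd (lt_of_lt_of_le hlt h) (lt_irrefl ρ)
    have hcard' : (Lcl hfin d').card ≤ n := by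
      have h4 := Finset.card_le_card hLsub
      rw [Finset.card_erase_of_mem (mem_Lcl.mpr ⟨μ, hμs, le_rfl⟩)] at h4
      have h5 : 0 < (Lcl hfin d).card := Finset.card_pos.mpr ⟨μ, mem_Lcl.mpr ⟨μ, hμs, le_rfl⟩⟩
      omega
    have hB' : ∀ ρ : P, (∃ σ ∈ d'.support, ρ ≤ σ) → Good bar (B ρ) ρ := by
      rintro ρ ⟨σ, hσ, hρσ⟩
      rcases hsupp' σ (Finsupp.mem_support_iff.mp hσ) with h | h
      · exact hB ρ ⟨σ, h, hρσ⟩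
      · exact hB ρ ⟨μ, hμs, hρσ.trans h⟩
    obtain ⟨z', hz1, hz2, hz3⟩ := ih d' hbard' B hB' hcard'
    refine ⟨z' + γ • b, ?_, ?_, ?_⟩
    · rw [map_add, hsemi, hGb]
      have h6 : z' + γ • b - (bar z' + LaurentPolynomial.invert γ • b)
          = (z' - bar z') + (γ - LaurentPolynomial.invert γ) • b := by
        rw [sub_smul]; abel
      rw [h6, hz1, hγc, hd'def]
      abel
    · intro ν hν
      rw [Finsupp.add_apply] at hν
      by_cases hz : z' ν = 0
      · have hb : b ν ≠ 0 := by
          intro h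
          rw [hz, Finsupp.smul_apply, h, smul_zero, add_zero] at hν
          exact hν rfl
        exact ⟨μ, hμs, hbsupp ν hb⟩
      · obtain ⟨σ, hσ, hνσ⟩ := hz2 ν hz
        rcases hsupp' σ (Finsupp.mem_support_iff.mp hσ) with h | h
        · exact ⟨σ, h, hνσ⟩
        · exact ⟨μ, hμs, hνσ.trans h⟩
    · intro ν e he
      rw [Finsupp.add_apply, AddMonoidAlgebra.coeff_add, Finsupp.add_apply, hz3 ν e he, zero_add, Finsupp.smul_apply,
        smul_eq_mul]
      by_contra h
      have hesupp : e ∈ (AddMonoidAlgebra.coeff (γ * b ν)).support := Finsupp.mem_support_iff.mpr h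
      have := AddMonoidAlgebra.support_coeff_mul_subset γ (b ν) hesupp
      rw [Finset.mem_add] at this
      obtain ⟨a, ha, b', hb', hab⟩ := this
      have ha' : a < 0 := by
        by_contra h'
        exact Finsupp.mem_support_iff.mp ha (hγneg a (by omega))
      have hb'0 : b' ≤ 0 := by
        by_cases hνμ : ν = μ
        · subst hνμ
          rw [hGμ] at hb'
          by_contra h'
          have : AddMonoidAlgebra.coeff (1 : LaurentPolynomial ℤ) b' = 0 := by
            rw [← LaurentPolynomial.T_zero, LaurentPolynomial.T_apply, if_neg (by omega)]
          exact Finsupp.mem_support_iff.mp hb' this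
        · by_contra h'
          exact Finsupp.mem_support_iff.mp hb' ((hGq ν hνμ).2 b' (by omega))
      omega


end S


/-- Existence and uniqueness of the IC/canonical basis (Lusztig, Du):
let `Π` be a poset with finite principal lower sets, and let the free
`ℤ[v, v⁻¹]`-module on `Π` (with `ℤ[v,v⁻¹]` realized as Laurent polynomials, `v = T 1`)
carry a semilinear bar-involution (`v ↦ v⁻¹` is `LaurentPolynomial.invert`) satisfying
`bar |λ⟩ = |λ⟩ + ∑_{μ < λ} a_{μ,λ} |μ⟩`.  Then there is a unique basis `{b_λ}` with
`bar b_λ = b_λ` and `b_λ ∈ |λ⟩ + ∑_{μ < λ} v⁻¹ ℤ[v⁻¹] |μ⟩` (the coefficient of `b_λ` at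
`μ ≠ λ` is supported in negative powers of `v` and vanishes unless `μ < λ`). -/
theorem stmt19 (P : Type) [PartialOrder P]
    (hfin : ∀ x : P, {y : P | y ≤ x}.Finite)
    (bar : (P →₀ LaurentPolynomial ℤ) →+ (P →₀ LaurentPolynomial ℤ))
    (hsemi : ∀ (c : LaurentPolynomial ℤ) (x : P →₀ LaurentPolynomial ℤ),
      bar (c • x) = (LaurentPolynomial.invert c) • bar x)
    (hinv : ∀ x, bar (bar x) = x)
    (htri : ∀ p q : P, (bar (Finsupp.single p 1) - Finsupp.single p 1 : P →₀ LaurentPolynomial ℤ) q ≠ 0 → q < p) :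
    ∃! b : P → (P →₀ LaurentPolynomial ℤ),
      ∀ p : P, bar (b p) = b p ∧ (b p) p = 1 ∧
        ∀ q : P, q ≠ p →
          ((b p) q ≠ 0 → q < p) ∧ (∀ d : ℤ, 0 ≤ d → (AddMonoidAlgebra.coeff ((b p) q)) d = 0) := by
  classical
  have E : ∀ (n : ℕ) (p : P), (hfin p).toFinset.card ≤ n →
      ∃ b, S.Good bar b p := by
    intro n
    induction n with
    | zero =>
      intro p hp
      have : 0 < (hfin p).toFinset.card :=
        Finset.card_pos.mpr ⟨p, (hfin p).mem_toFinset.mpr le_rfl⟩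
      omega
    | succ n ih =>
      intro p hp
      have hlt : ∀ μ, μ < p → (hfin μ).toFinset.card ≤ n := by
        intro μ hμ
        have hsub : (hfin μ).toFinset ⊆ (hfin p).toFinset.erase p := by
          intro y hy
          have hy' : y ≤ μ := (hfin μ).mem_toFinset.mp hy
          refine Finset.mem_erase.mpr ⟨?_, (hfin p).mem_toFinset.mpr (hy'.trans hμ.le)⟩
          rintro rfl
          exact absurd hμ hy'.not_gt
        have h4 := Finset.card_le_card hsub
        rw [Finset.card_erase_of_mem ((hfin p).mem_toFinset.mpr le_rfl)] at h4
        have h5 : 0 < (hfin p).toFinset.card :=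
          Finset.card_pos.mpr ⟨p, (hfin p).mem_toFinset.mpr le_rfl⟩
        omega
      set B : P → (P →₀ LaurentPolynomial ℤ) :=
        fun μ => if h : μ < p then (ih μ (hlt μ h)).choose else 0 with hBdef
      have hBgood : ∀ μ, μ < p → S.Good bar (B μ) μ := by
        intro μ h
        rw [hBdef]
        simp only [dif_pos h]
        exact (ih μ (hlt μ h)).choose_spec
      set d : P →₀ LaurentPolynomial ℤ :=
        bar (Finsupp.single p 1) - Finsupp.single p 1 with hd
      have hbard : bar d = -d := by
        rw [hd, map_sub, hinv]
        abel
      have hdlt : ∀ q, d q ≠ 0 → q < p := fun q h => htri p q h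
      obtain ⟨z, hz1, hz2, hz3⟩ := S.key hfin bar hsemi htri (S.Lcl hfin d).card d hbard B
        (fun μ hμ => by
          obtain ⟨σ, hσ, hle⟩ := hμ
          exact hBgood μ (lt_of_le_of_lt hle (hdlt σ (Finsupp.mem_support_iff.mp hσ))))
        le_rfl
      refine ⟨Finsupp.single p 1 + z, ?_, ?_, ?_⟩
      · rw [map_add]
        have h1 : bar (Finsupp.single p 1) = Finsupp.single p 1 + d := by
          rw [hd]; abel
        have h2 : bar z = z - d := by rw [← hz1]; abel
        rw [h1, h2]; abel
      · have hzp : z p = 0 := by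
          by_contra h
          obtain ⟨σ, hσ, hle⟩ := hz2 p h
          exact absurd (hdlt σ (Finsupp.mem_support_iff.mp hσ)) hle.not_gt
        rw [Finsupp.add_apply, Finsupp.single_eq_same, hzp, add_zero]
      · intro q hq
        have hsq : (Finsupp.single p (1 : LaurentPolynomial ℤ)) q = 0 :=
          Finsupp.single_eq_of_ne' (Ne.symm hq)
        constructor
        · intro h
          rw [Finsupp.add_apply, hsq, zero_add] at h
          obtain ⟨σ, hσ, hle⟩ := hz2 q h
          exact lt_of_le_of_lt hle (hdlt σ (Finsupp.mem_support_iff.mp hσ))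
        · intro e he
          rw [Finsupp.add_apply, hsq, zero_add]
          exact hz3 q e he
  have Eall : ∀ p : P, ∃ b, S.Good bar b p := fun p => E _ p le_rfl
  refine ⟨fun p => (Eall p).choose, fun p => (Eall p).choose_spec, ?_⟩
  intro b' hb'
  funext p
  have hx : bar (b' p - (Eall p).choose) = b' p - (Eall p).choose := by
    rw [map_sub, (hb' p).1, ((Eall p).choose_spec).1]
  have hcoef : ∀ (q : P) (e : ℤ), 0 ≤ e → AddMonoidAlgebra.coeff ((b' p - (Eall p).choose) q) e = 0 := by
    intro q e he
    by_cases hq : q = p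
    · subst hq
      rw [Finsupp.sub_apply, (hb' q).2.1, ((Eall q).choose_spec).2.1, sub_self]
      simp
    · rw [Finsupp.sub_apply, AddMonoidAlgebra.coeff_sub, Finsupp.sub_apply, ((hb' p).2.2 q hq).2 e he,
        (((Eall p).choose_spec).2.2 q hq).2 e he, sub_self]
  have h0 := S.selfbar_eq_zero bar hsemi htri _ hx hcoef
  exact sub_eq_zero.mp h0
end
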